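/- With N = 3 skills and M = 2 states and uniform skill prior, the maximal mutual information Ī*(3,2) over all assignment matrices p ∈ ℝ^{3×2} with nonnegative rows summing to 1 is log 3 − (2/3) log 2, which is strictly less than Ī*(2,2) = log 2. Hence removing a skill can strictly increase the uniform-prior optimal mutual information. -/

import Mathlib

open Real in
/-- Tangent bound: `x - 1 ≤ x log x` for `x ≥ 0`. -/
lemma aux_sub_one_le_mul_log {x : ℝ} (hx : 0 ≤ x) : x - 1 ≤ x * Real.log x := by
  rcases eq_or_lt_of_le hx with h | h
  · simp [← h]
  · have h1 : Real.log x⁻¹ ≤ x⁻¹ - 1 := Real.log_le_sub_one_of_pos (inv_pos.2 h)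
    rw [Real.log_inv] at h1
    have h2 : x * (1 - x⁻¹) ≤ x * Real.log x :=
      mul_le_mul_of_nonneg_left (by linarith) hx
    have h3 : x * (1 - x⁻¹) = x - 1 := by field_simp
    linarith

/-- Shifted tangent bound: `v log 2 + v - 2 ≤ v log v` for `v ≥ 0`. -/
lemma aux_shift_le_mul_log {v : ℝ} (hv : 0 ≤ v) :
    v * Real.log 2 + v - 2 ≤ v * Real.log v := by
  rcases eq_or_lt_of_le hv with h | h
  · simp [← h]
  · have hu : (0:ℝ) ≤ v / 2 := by linarith
    have h1 : v / 2 - 1 ≤ (v / 2) * Real.log (v / 2) := aux_sub_one_le_mul_log hu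
    have h2 : Real.log v = Real.log 2 + Real.log (v / 2) := by
      rw [← Real.log_mul (by norm_num) (by positivity)]
      congr 1; ring
    nlinarith [h1, h2]

/-- Chord bound for the (negated) binary entropy, lower half. -/
lemma aux_chord_half {t : ℝ} (h0 : 0 ≤ t) (h1 : t ≤ 1/2) :
    t * Real.log t + (1 - t) * Real.log (1 - t) + 2 * Real.log 2 * t ≤ 0 := by
  rcases eq_or_lt_of_le h0 with h | h
  · simp [← h]
  · have hlog : Real.log (4 * t) = 2 * Real.log 2 + Real.log t := by
      rw [show (4:ℝ) * t = 2 ^ 2 * t by ring,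
        Real.log_mul (by norm_num) (ne_of_gt h), Real.log_pow]
      push_cast; ring
    rcases le_total t (2/5) with hc | hc
    · have hA : Real.log (4 * t) ≤ 4 * t - 1 := Real.log_le_sub_one_of_pos (by linarith)
      have hB : Real.log (1 - t) ≤ -t := by
        have := Real.log_le_sub_one_of_pos (show (0:ℝ) < 1 - t by linarith)
        linarith
      have e1 : t * Real.log (4 * t) ≤ t * (4 * t - 1) :=
        mul_le_mul_of_nonneg_left hA h0
      have e2 : (1 - t) * Real.log (1 - t) ≤ (1 - t) * (-t) :=
        mul_le_mul_of_nonneg_left hB (by linarith)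
      nlinarith [e1, e2, mul_nonneg h0 (show (0:ℝ) ≤ 2/5 - t by linarith)]
    · have hA : Real.log (2 * t) ≤ 2 * t - 1 := Real.log_le_sub_one_of_pos (by linarith)
      have hB : Real.log (2 * (1 - t)) ≤ 1 - 2 * t := by
        have := Real.log_le_sub_one_of_pos (show (0:ℝ) < 2 * (1 - t) by linarith)
        linarith
      have i1 : Real.log (2 * t) = Real.log 2 + Real.log t :=
        Real.log_mul (by norm_num) (ne_of_gt h)
      have i2 : Real.log (2 * (1 - t)) = Real.log 2 + Real.log (1 - t) :=
        Real.log_mul (by norm_num) (by intro hh; nlinarith)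
      have e1 : t * Real.log (2 * t) ≤ t * (2 * t - 1) :=
        mul_le_mul_of_nonneg_left hA h0
      have e2 : (1 - t) * Real.log (2 * (1 - t)) ≤ (1 - t) * (1 - 2 * t) :=
        mul_le_mul_of_nonneg_left hB (by linarith)
      have hl2 : (0.6931471803 : ℝ) < Real.log 2 := Real.log_two_gt_d9
      nlinarith [e1, e2,
        mul_nonneg (show (0:ℝ) ≤ 1 - 2*t by linarith)
          (show (0:ℝ) ≤ Real.log 2 - (1 - 2*t) by linarith)]

/-- Chord bound for the (negated) binary entropy on `[0,1]`. -/
lemma aux_chord {t : ℝ} (h0 : 0 ≤ t) (h1 : t ≤ 1) :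
    t * Real.log t + (1 - t) * Real.log (1 - t) + 2 * Real.log 2 * min t (1 - t) ≤ 0 := by
  rcases le_total t (1/2) with h | h
  · rw [min_eq_left (by linarith)]
    exact aux_chord_half h0 h
  · rw [min_eq_right (by linarith)]
    have h' := aux_chord_half (show (0:ℝ) ≤ 1 - t by linarith) (by linarith)
    rw [show (1:ℝ) - (1 - t) = t by ring] at h'
    linarith

/-- Tangent bounds for `Ψ(s) = s log s + (3-s) log (3-s)` at `s = 1` and `s = 2`. -/
lemma aux_psi {s : ℝ} (h0 : 0 ≤ s) (h3 : s ≤ 3) :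
    Real.log 2 * max s (3 - s) ≤ s * Real.log s + (3 - s) * Real.log (3 - s) := by
  have A := aux_sub_one_le_mul_log h0
  have B := aux_sub_one_le_mul_log (show (0:ℝ) ≤ 3 - s by linarith)
  have A' := aux_shift_le_mul_log h0
  have B' := aux_shift_le_mul_log (show (0:ℝ) ≤ 3 - s by linarith)
  rcases max_cases s (3 - s) with ⟨he, _⟩ | ⟨he, _⟩ <;> rw [he] <;> linarith

/-- Rounding bound: `2 - 2 Σ min(tₙ, 1-tₙ) ≤ max(s, 3-s)`. -/
lemma aux_count {t1 t2 t3 : ℝ} (a1 : 0 ≤ t1) (b1 : t1 ≤ 1) (a2 : 0 ≤ t2) (b2 : t2 ≤ 1)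
    (a3 : 0 ≤ t3) (b3 : t3 ≤ 1) :
    2 - 2 * (min t1 (1 - t1) + min t2 (1 - t2) + min t3 (1 - t3)) ≤
      max (t1 + t2 + t3) (3 - (t1 + t2 + t3)) := by
  have M1 := le_max_left (t1 + t2 + t3) (3 - (t1 + t2 + t3))
  have M2 := le_max_right (t1 + t2 + t3) (3 - (t1 + t2 + t3))
  rcases min_cases t1 (1 - t1) with ⟨e1, l1⟩ | ⟨e1, l1⟩ <;>
    rcases min_cases t2 (1 - t2) with ⟨e2, l2⟩ | ⟨e2, l2⟩ <;>
    rcases min_cases t3 (1 - t3) with ⟨e3, l3⟩ | ⟨e3, l3⟩ <;>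
    linarith

/-- Splitting of `x log (x/q)` when `0 ≤ x ≤ q` (with the `log 0 = 0` convention). -/
lemma aux_split {x q : ℝ} (hx : 0 ≤ x) (hq : x ≤ q) :
    x * Real.log (x / q) = x * Real.log x - x * Real.log q := by
  rcases eq_or_lt_of_le hx with h | h
  · simp [← h]
  · rw [Real.log_div (ne_of_gt h) (ne_of_gt (lt_of_lt_of_le h hq))]
    ring

/-- Uniform-prior mutual information of a stochastic skill-to-state assignment. -/
noncomputable def uniformPriorMI (N M : ℕ) (p : Fin N → Fin M → ℝ) : ℝ :=
  Real.log N + (1 / N : ℝ) * ∑ n, ∑ m, p n m * Real.log (p n m / ∑ n', p n' m)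

/-- With `N = 3` skills and `M = 2` states under the uniform skill prior, the maximal
mutual information is `log 3 − (2/3) log 2`: every valid assignment is bounded by it,
some valid assignment attains it, and it is strictly smaller than `Ī*(2,2) = log 2`.
Hence removing a skill can strictly increase the uniform-prior optimal MI. -/
theorem uniformPriorMI_three_two_lt_two_two :
    (∀ p : Fin 3 → Fin 2 → ℝ, (∀ n m, 0 ≤ p n m) → (∀ n, ∑ m, p n m = 1) →
      uniformPriorMI 3 2 p ≤ Real.log 3 - (2 / 3) * Real.log 2)
    ∧ (∃ p : Fin 3 → Fin 2 → ℝ, (∀ n m, 0 ≤ p n m) ∧ (∀ n, ∑ m, p n m = 1) ∧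
        uniformPriorMI 3 2 p = Real.log 3 - (2 / 3) * Real.log 2)
    ∧ Real.log 3 - (2 / 3) * Real.log 2 < Real.log 2 := by
  refine ⟨?_, ?_, ?_⟩
  · intro p hp hrow
    have r1 := hrow 0; have r2 := hrow 1; have r3 := hrow 2
    rw [Fin.sum_univ_two] at r1 r2 r3
    have pa1 : p 0 1 = 1 - p 0 0 := by linarith
    have pb1 : p 1 1 = 1 - p 1 0 := by linarith
    have pc1 : p 2 1 = 1 - p 2 0 := by linarith
    simp only [uniformPriorMI, Fin.sum_univ_three, Fin.sum_univ_two, pa1, pb1, pc1]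
    norm_num
    set a := p 0 0 with ha
    set b := p 1 0 with hb
    set c := p 2 0 with hc
    have ha0 : 0 ≤ a := hp 0 0
    have hb0 : 0 ≤ b := hp 1 0
    have hc0 : 0 ≤ c := hp 2 0
    have ha1 : a ≤ 1 := by have := hp 0 1; rw [pa1] at this; linarith
    have hb1 : b ≤ 1 := by have := hp 1 1; rw [pb1] at this; linarith
    have hc1 : c ≤ 1 := by have := hp 2 1; rw [pc1] at this; linarith
    rw [show 1 - a + (1 - b) + (1 - c) = 3 - (a + b + c) from by ring]
    rw [aux_split ha0 (show a ≤ a + b + c by linarith),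
        aux_split hb0 (show b ≤ a + b + c by linarith),
        aux_split hc0 (show c ≤ a + b + c by linarith),
        aux_split (show (0:ℝ) ≤ 1 - a by linarith) (show 1 - a ≤ 3 - (a + b + c) by linarith),
        aux_split (show (0:ℝ) ≤ 1 - b by linarith) (show 1 - b ≤ 3 - (a + b + c) by linarith),
        aux_split (show (0:ℝ) ≤ 1 - c by linarith) (show 1 - c ≤ 3 - (a + b + c) by linarith)]
    have c1 := aux_chord ha0 ha1
    have c2 := aux_chord hb0 hb1
    have c3 := aux_chord hc0 hc1
    have hpsi := aux_psi (show (0:ℝ) ≤ a + b + c by linarith) (by linarith)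
    have hcount := aux_count ha0 ha1 hb0 hb1 hc0 hc1
    have hmul := mul_le_mul_of_nonneg_left hcount
      (Real.log_nonneg (by norm_num : (1:ℝ) ≤ 2))
    nlinarith [c1, c2, c3, hpsi, hmul]
  · refine ⟨![![1, 0], ![1, 0], ![0, 1]], ?_, ?_, ?_⟩
    · intro n m; fin_cases n <;> fin_cases m <;> norm_num
    · intro n; fin_cases n <;> simp [Fin.sum_univ_two]
    · simp only [uniformPriorMI, Fin.sum_univ_three, Fin.sum_univ_two]
      norm_num
      have h2 : Matrix.vecCons (1:ℝ) (fun i : Fin 2 => Matrix.vecCons (1:ℝ) (fun _ : Fin 1 => (0:ℝ)) i) (2 : Fin 3) = 0 := by rfl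
      rw [h2, add_zero, zero_mul, add_zero]
      ring
  · have h : Real.log 27 < Real.log 32 := Real.log_lt_log (by norm_num) (by norm_num)
    have e27 : Real.log 27 = 3 * Real.log 3 := by
      rw [show (27:ℝ) = 3 ^ 3 by norm_num, Real.log_pow]; norm_num
    have e32 : Real.log 32 = 5 * Real.log 2 := by
      rw [show (32:ℝ) = 2 ^ 5 by norm_num, Real.log_pow]; norm_num
    linarith
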